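/- Let χ ≥ 1 and ζ = (√χ − 1)/(√χ + 1). If N ≥ √χ and χ > 1, then 2ζᴺ/(1 + ζ²ᴺ) < 0.266. -/

import Mathlib

/-- If `χ > 1` and `N ≥ √χ`, then `2ζᴺ/(1+ζ²ᴺ) < 0.266` where `ζ = (√χ−1)/(√χ+1)`. -/
theorem chebyshev_contraction_bound (χ : ℝ) (hχ : 1 < χ) (N : ℕ)
    (hN : Real.sqrt χ ≤ (N : ℝ)) :
    let ζ := (Real.sqrt χ - 1) / (Real.sqrt χ + 1)
    2 * ζ ^ N / (1 + ζ ^ (2 * N)) < 0.266 := by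
  intro ζ
  set t := Real.sqrt χ with ht_def
  have ht : 1 < t := by
    rw [ht_def, show (1:ℝ) = Real.sqrt 1 by simp]
    exact Real.sqrt_lt_sqrt (by norm_num) hχ
  have ht0 : 0 < t := by linarith
  have hζ0 : 0 ≤ ζ := div_nonneg (by linarith) (by linarith)
  have hN0 : N ≠ 0 := by
    rintro rfl
    simp only [Nat.cast_zero] at hN
    linarith
  set u : ℝ := 1 / t with hu_def
  have hu0 : 0 < u := by positivity
  have hu1 : u < 1 := by
    rw [hu_def, div_lt_one ht0]; exact ht
  -- exp u ≤ 1 + u + u^2/2 + (2/9) u^3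
  have hS : Real.exp u ≤ 1 + u + u ^ 2 / 2 + (2 / 9) * u ^ 3 := by
    have h := Real.exp_bound' (le_of_lt hu0) (le_of_lt hu1) (n := 3) (by norm_num)
    simp only [Finset.sum_range_succ, Finset.sum_range_zero] at h
    norm_num [Nat.factorial] at h
    linarith
  have hSpos : (0:ℝ) < 1 + u + u ^ 2 / 2 + (2 / 9) * u ^ 3 := by positivity
  -- exp (2u) < (1+u)/(1-u)
  have hexp2 : Real.exp (2 * u) < (1 + u) / (1 - u) := by
    have he : Real.exp (2 * u) = Real.exp u ^ 2 := by
      rw [sq, ← Real.exp_add]; ring_nf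
    have hsq : Real.exp u ^ 2 ≤ (1 + u + u ^ 2 / 2 + (2 / 9) * u ^ 3) ^ 2 :=
      pow_le_pow_left₀ (le_of_lt (Real.exp_pos u)) hS 2
    have hpoly : (1 + u + u ^ 2 / 2 + (2 / 9) * u ^ 3) ^ 2 < (1 + u) / (1 - u) := by
      rw [lt_div_iff₀ (by linarith)]
      nlinarith [pow_pos hu0 3, pow_pos hu0 4, pow_pos hu0 5, pow_pos hu0 6,
        pow_pos hu0 7, sq_nonneg u, mul_pos hu0 hu0]
    calc Real.exp (2 * u) = Real.exp u ^ 2 := he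
      _ ≤ _ := hsq
      _ < _ := hpoly
  -- ζ < exp (-(2u))
  have hζlt : ζ < Real.exp (-(2 * u)) := by
    have hζeq : ζ = (1 - u) / (1 + u) := by
      show (t - 1) / (t + 1) = (1 - u) / (1 + u)
      rw [hu_def, div_eq_div_iff (by linarith) (by positivity)]
      field_simp
    have h3 : (1 - u) * Real.exp (2 * u) < 1 + u := by
      calc (1 - u) * Real.exp (2 * u) < (1 - u) * ((1 + u) / (1 - u)) :=
            mul_lt_mul_of_pos_left hexp2 (by linarith)
        _ = 1 + u := by
            have h0 : (1:ℝ) - u ≠ 0 := by linarith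
            field_simp
    rw [hζeq, Real.exp_neg, div_lt_iff₀ (by linarith : (0:ℝ) < 1 + u),
      ← div_eq_inv_mul, lt_div_iff₀ (Real.exp_pos _)]
    linarith
  -- ζ^N < exp (-2)
  have hpow : ζ ^ N < Real.exp (-2) := by
    have hlt : ζ ^ N < Real.exp (-(2 * u)) ^ N := pow_lt_pow_left₀ hζlt hζ0 hN0
    have heq : Real.exp (-(2 * u)) ^ N = Real.exp (-(2 * u) * N) := by
      rw [← Real.exp_nat_mul]; ring_nf
    have hle : Real.exp (-(2 * u) * N) ≤ Real.exp (-2) := by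
      apply Real.exp_le_exp.mpr
      rw [neg_mul, neg_le_neg_iff, hu_def]
      rw [mul_one_div, div_mul_eq_mul_div, le_div_iff₀ ht0]
      nlinarith
    calc ζ ^ N < Real.exp (-(2 * u)) ^ N := hlt
      _ = Real.exp (-(2 * u) * N) := heq
      _ ≤ Real.exp (-2) := hle
  -- exp(-2) < 0.1354
  have hnum : Real.exp (-2) < 0.1354 := by
    have he1 : (2.7182818283:ℝ) < Real.exp 1 := Real.exp_one_gt_d9
    have he2 : (7.389:ℝ) < Real.exp 2 := by
      have : Real.exp 2 = Real.exp 1 * Real.exp 1 := by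
        rw [← Real.exp_add]; norm_num
      nlinarith
    rw [Real.exp_neg, inv_lt_comm₀ (by linarith) (by norm_num)]
    calc (0.1354:ℝ)⁻¹ < 7.389 := by norm_num
      _ < Real.exp 2 := he2
  set r := ζ ^ N with hr_def
  have hr0 : 0 ≤ r := pow_nonneg hζ0 N
  have hrlt : r < 0.1354 := lt_trans hpow hnum
  have h2N : ζ ^ (2 * N) = r ^ 2 := by rw [hr_def, ← pow_mul, mul_comm]
  rw [h2N, div_lt_iff₀ (by positivity)]
  nlinarith [sq_nonneg (r - 0.1354), hr0, hrlt]
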